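/- Let s^1,…,s^k be time series with s^l ∈ ℝ^{m_l}, and let z ∈ ℝ^L be a mean of s^1,…,s^k, i.e., F(z) ≤ F(z') for every time series z' of any length. Let P_1,…,P_k be optimal warping paths, i.e., P_l has order L×m_l and C_{P_l}(z, s^l) = dtw(z, s^l)². Then for every j ∈ {1,…,L}: z_j = (∑_{l=1}^k ∑_{(j,i)∈V(P_l)} s^l_i) / (∑_{l=1}^k |{i : (j,i) ∈ V(P_l)}|). -/
import Mathlib


/-- A warping path of order `m × n`: a finite sequence of pairs of positive
integers starting at `(1,1)`, ending at `(m,n)`, each step increasing the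
coordinates by `(1,0)`, `(0,1)` or `(1,1)`. -/
structure WarpingPath (m n : ℕ) where
  len : ℕ
  len_pos : 0 < len
  pt : ℕ → ℕ × ℕ
  first : pt 0 = (1, 1)
  last : pt (len - 1) = (m, n)
  step : ∀ t, t + 1 < len →
    pt (t + 1) = ((pt t).1 + 1, (pt t).2) ∨
    pt (t + 1) = ((pt t).1, (pt t).2 + 1) ∨
    pt (t + 1) = ((pt t).1 + 1, (pt t).2 + 1)

/-- The set of vertices `V(P)` of a warping path. -/
def WarpingPath.V {m n : ℕ} (P : WarpingPath m n) : Finset (ℕ × ℕ) :=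
  (Finset.range P.len).image P.pt

/-- The cost `C_P(s, s') = ∑_{(i,j) ∈ V(P)} (s_i − s'_j)²` of a warping path. -/
noncomputable def WarpingPath.cost {m n : ℕ} (P : WarpingPath m n) (s s' : ℕ → ℝ) : ℝ :=
  ∑ v ∈ P.V, (s v.1 - s' v.2) ^ 2

/-- The dtw-distance between a time series `s` of length `m` and a time series
`s'` of length `n`: the minimum over all warping paths `P` of order `m × n` of
`√(C_P(s, s'))`. -/
noncomputable def dtw (m n : ℕ) (s s' : ℕ → ℝ) : ℝ :=
  Real.sqrt (sInf {c : ℝ | ∃ P : WarpingPath m n, c = P.cost s s'})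

lemma my_cost_nonneg {m n : ℕ} (P : WarpingPath m n) (s s' : ℕ → ℝ) : 0 ≤ P.cost s s' :=
  Finset.sum_nonneg fun v _ => sq_nonneg _

lemma my_dtw_sq_le {m n : ℕ} (P : WarpingPath m n) (s s' : ℕ → ℝ) :
    (dtw m n s s') ^ 2 ≤ P.cost s s' := by
  have hbdd : BddBelow {c : ℝ | ∃ Q : WarpingPath m n, c = Q.cost s s'} :=
    ⟨0, fun c ⟨Q, hQ⟩ => hQ ▸ my_cost_nonneg Q s s'⟩
  have hne : {c : ℝ | ∃ Q : WarpingPath m n, c = Q.cost s s'}.Nonempty := ⟨_, P, rfl⟩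
  have h0 : 0 ≤ sInf {c : ℝ | ∃ Q : WarpingPath m n, c = Q.cost s s'} :=
    le_csInf hne fun c ⟨Q, hQ⟩ => hQ ▸ my_cost_nonneg Q s s'
  have hle := csInf_le hbdd (show P.cost s s' ∈ _ from ⟨P, rfl⟩)
  calc (dtw m n s s') ^ 2 = sInf {c : ℝ | ∃ Q : WarpingPath m n, c = Q.cost s s'} :=
      Real.sq_sqrt h0
    _ ≤ P.cost s s' := hle

lemma my_nat_ivt (f : ℕ → ℕ) (n : ℕ) (hstep : ∀ t, t + 1 ≤ n → f (t + 1) ≤ f t + 1)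
    (j : ℕ) (h1 : f 0 ≤ j) (h2 : j ≤ f n) : ∃ t ≤ n, f t = j := by
  induction n with
  | zero => exact ⟨0, le_refl _, le_antisymm h1 h2⟩
  | succ n ih =>
    by_cases h : j ≤ f n
    · obtain ⟨t, ht, hft⟩ := ih (fun t ht => hstep t (ht.trans (Nat.le_succ n))) h
      exact ⟨t, ht.trans (Nat.le_succ n), hft⟩
    · push_neg at h
      have hs := hstep n (le_refl _)
      exact ⟨n + 1, le_refl _, le_antisymm (le_trans hs h) h2⟩
theorem stmt11 (k : ℕ) (hk : 1 ≤ k) (m : Fin k → ℕ) (hm : ∀ l, 1 ≤ m l)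
    (s : Fin k → ℕ → ℝ) (L : ℕ) (hL : 1 ≤ L) (z : ℕ → ℝ)
    (hmean : ∀ L' : ℕ, 1 ≤ L' → ∀ z' : ℕ → ℝ,
      (1 / (k : ℝ)) * ∑ l : Fin k, (dtw L (m l) z (s l)) ^ 2 ≤
        (1 / (k : ℝ)) * ∑ l : Fin k, (dtw L' (m l) z' (s l)) ^ 2)
    (P : ∀ l : Fin k, WarpingPath L (m l))
    (hopt : ∀ l : Fin k, (P l).cost z (s l) = (dtw L (m l) z (s l)) ^ 2) :
    ∀ j ∈ Finset.Icc 1 L, z j =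
      (∑ l : Fin k, ∑ v ∈ (P l).V.filter (fun v => v.1 = j), s l v.2) /
      ((∑ l : Fin k, ((P l).V.filter (fun v => v.1 = j)).card : ℕ) : ℝ) := by
  intro j hj
  obtain ⟨hj1, hjL⟩ := Finset.mem_Icc.mp hj
  set F : Fin k → Finset (ℕ × ℕ) := fun l => (P l).V.filter (fun v => v.1 = j) with hF
  set N : ℕ := ∑ l : Fin k, (F l).card with hNdef
  set B : ℝ := ∑ l : Fin k, ∑ v ∈ F l, s l v.2 with hBdef
  -- N > 0
  have hNpos : 0 < N := by
    have l0 : Fin k := ⟨0, hk⟩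
    have hf : ∃ t ≤ (P l0).len - 1, ((P l0).pt t).1 = j := by
      apply my_nat_ivt (fun t => ((P l0).pt t).1) ((P l0).len - 1)
      · intro t ht
        have ht' : t + 1 < (P l0).len := by omega
        rcases (P l0).step t ht' with h | h | h <;> simp [h]
      · simp [(P l0).first, hj1]
      · simp [(P l0).last, hjL]
    obtain ⟨t, ht, hft⟩ := hf
    have hmem : (P l0).pt t ∈ F l0 := by
      refine Finset.mem_filter.mpr ⟨?_, hft⟩
      exact Finset.mem_image.mpr ⟨t, Finset.mem_range.mpr (by have := (P l0).len_pos; omega), rfl⟩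
    have : 0 < (F l0).card := Finset.card_pos.mpr ⟨_, hmem⟩
    calc 0 < (F l0).card := this
      _ ≤ N := Finset.single_le_sum (f := fun l => (F l).card) (fun l _ => Nat.zero_le _) (Finset.mem_univ l0)
  have hNR : (0 : ℝ) < (N : ℝ) := by exact_mod_cast hNpos
  -- key inequality
  have key : ∀ t : ℝ,
      ∑ l : Fin k, ∑ v ∈ F l, (z j - s l v.2) ^ 2 ≤
      ∑ l : Fin k, ∑ v ∈ F l, (t - s l v.2) ^ 2 := by
    intro t
    set z' : ℕ → ℝ := Function.update z j t with hz'
    have hkR : (0 : ℝ) < (k : ℝ) := by exact_mod_cast hk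
    have h1 : ∑ l : Fin k, (P l).cost z (s l) ≤ ∑ l : Fin k, (P l).cost z' (s l) := by
      have h2 := hmean L hL z'
      have h3 : ∑ l : Fin k, (dtw L (m l) z (s l)) ^ 2 ≤
          ∑ l : Fin k, (dtw L (m l) z' (s l)) ^ 2 := by
        have := mul_le_mul_of_nonneg_left h2 (le_of_lt hkR)
        rw [← mul_assoc, ← mul_assoc, mul_one_div_cancel hkR.ne', one_mul, one_mul] at this
        exact this
      calc ∑ l : Fin k, (P l).cost z (s l)
          = ∑ l : Fin k, (dtw L (m l) z (s l)) ^ 2 := by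
            exact Finset.sum_congr rfl fun l _ => hopt l
        _ ≤ ∑ l : Fin k, (dtw L (m l) z' (s l)) ^ 2 := h3
        _ ≤ ∑ l : Fin k, (P l).cost z' (s l) :=
            Finset.sum_le_sum fun l _ => my_dtw_sq_le (P l) z' (s l)
    -- split each cost
    have split : ∀ (w : ℕ → ℝ) (l : Fin k), (P l).cost w (s l) =
        (∑ v ∈ F l, (w j - s l v.2) ^ 2) +
        ∑ v ∈ (P l).V.filter (fun v => ¬ v.1 = j), (w v.1 - s l v.2) ^ 2 := by
      intro w l
      rw [WarpingPath.cost, ← Finset.sum_filter_add_sum_filter_not (P l).V (fun v => v.1 = j)]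
      congr 1
      exact Finset.sum_congr rfl fun v hv => by
        rw [(Finset.mem_filter.mp hv).2]
    have hrwz : ∀ l : Fin k,
        ∑ v ∈ (P l).V.filter (fun v => ¬ v.1 = j), (z' v.1 - s l v.2) ^ 2 =
        ∑ v ∈ (P l).V.filter (fun v => ¬ v.1 = j), (z v.1 - s l v.2) ^ 2 := by
      intro l
      refine Finset.sum_congr rfl fun v hv => ?_
      rw [hz', Function.update_of_ne (Finset.mem_filter.mp hv).2]
    have hz'j : z' j = t := Function.update_self j t z
    simp only [split z, split z', hrwz, hz'j, Finset.sum_add_distrib] at h1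
    linarith
  -- expand to quadratic
  have expand : ∀ t : ℝ, ∑ l : Fin k, ∑ v ∈ F l, (t - s l v.2) ^ 2 =
      (N : ℝ) * t ^ 2 - 2 * B * t + ∑ l : Fin k, ∑ v ∈ F l, (s l v.2) ^ 2 := by
    intro t
    have hper : ∀ l : Fin k, ∑ v ∈ F l, (t - s l v.2) ^ 2 =
        ((F l).card : ℝ) * t ^ 2 - 2 * (∑ v ∈ F l, s l v.2) * t +
          ∑ v ∈ F l, (s l v.2) ^ 2 := by
      intro l
      simp only [sub_sq, Finset.sum_add_distrib, Finset.sum_sub_distrib, Finset.sum_const,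
        nsmul_eq_mul, ← Finset.mul_sum]
      ring
    rw [hNdef, hBdef]
    push_cast
    simp only [hper, Finset.sum_add_distrib, Finset.sum_sub_distrib, ← Finset.sum_mul,
      ← Finset.mul_sum]
  clear_value F N B
  have hkey := key (B / N)
  rw [expand, expand] at hkey
  have hcancel : (N : ℝ) * (B / N) = B := by field_simp
  rw [eq_div_iff hNR.ne']
  nlinarith [sq_nonneg ((N : ℝ) * z j - B), hkey, hcancel, sq_nonneg (B / N)]
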